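/- Let f : (0, a] → ℝ be nonnegative and integrable on (0, a]. Then there exists a sequence tₙ → 0⁺ with tₙ ∈ (0, a] such that f(tₙ) · tₙ · |ln tₙ| → 0. -/

import Mathlib

open MeasureTheory Filter Topology

lemma aux_not_int {δ : ℝ} (hδ0 : 0 < δ) (hδ1 : δ < 1) :
    ¬ IntegrableOn (fun t => (t * |Real.log t|)⁻¹) (Set.Ioo 0 δ) volume := by
  intro h
  set b := -Real.log δ with hb
  have hb0 : 0 < b := by
    have := Real.log_neg hδ0 hδ1
    simp only [hb]; linarith
  have himg : (fun x => Real.exp (-x)) '' Set.Ioi b = Set.Ioo 0 δ := by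
    ext y
    constructor
    · rintro ⟨x, hx, rfl⟩
      refine ⟨Real.exp_pos _, ?_⟩
      calc Real.exp (-x) < Real.exp (-b) := by
            apply Real.exp_lt_exp.2
            have := Set.mem_Ioi.1 hx; linarith
        _ = δ := by rw [hb, neg_neg, Real.exp_log hδ0]
    · rintro ⟨hy0, hyδ⟩
      refine ⟨-Real.log y, ?_, show Real.exp (-(-Real.log y)) = y by
        rw [neg_neg, Real.exp_log hy0]⟩
      have := Real.log_lt_log hy0 hyδ
      simp only [Set.mem_Ioi, hb]; linarith
  have hderiv : ∀ x ∈ Set.Ioi b,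
      HasDerivWithinAt (fun x => Real.exp (-x)) (-Real.exp (-x)) (Set.Ioi b) x := by
    intro x _
    have := (Real.hasDerivAt_exp (-x)).comp x (hasDerivAt_neg x)
    simpa [mul_neg_one, Function.comp_def] using this.hasDerivWithinAt
  have hinj : Set.InjOn (fun x => Real.exp (-x)) (Set.Ioi b) := by
    intro x _ y _ hxy
    have := Real.exp_injective hxy
    linarith
  rw [← himg, integrableOn_image_iff_integrableOn_abs_deriv_smul measurableSet_Ioi hderiv hinj] at h
  have h2 : IntegrableOn (fun x : ℝ => x ^ (-1 : ℝ)) (Set.Ioi b) volume := by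
    apply h.congr_fun ?_ measurableSet_Ioi
    intro x hx
    have hx0 : 0 < x := hb0.trans hx
    have he : (0:ℝ) < Real.exp (-x) := Real.exp_pos _
    simp only [smul_eq_mul, Real.log_exp, abs_neg, abs_of_pos he, abs_of_pos hx0,
      Real.rpow_neg_one]
    field_simp
  rw [integrableOn_Ioi_rpow_iff hb0] at h2
  linarith

/-- If `f : (0, a] → ℝ` is nonnegative and integrable on `(0, a]`, then
there is a sequence `tₙ → 0⁺` in `(0, a]` along which `f(tₙ) · tₙ · |log tₙ| → 0`. -/
theorem stmt10 (a : ℝ) (ha : 0 < a) (f : ℝ → ℝ)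
    (hf0 : ∀ t ∈ Set.Ioc 0 a, 0 ≤ f t)
    (hf : IntegrableOn f (Set.Ioc 0 a) volume) :
    ∃ t : ℕ → ℝ, (∀ n, t n ∈ Set.Ioc 0 a) ∧ Tendsto t atTop (𝓝 0) ∧
      Tendsto (fun n => f (t n) * t n * |Real.log (t n)|) atTop (𝓝 0) := by
  have key : ∀ n : ℕ, ∃ t ∈ Set.Ioc 0 (min a (Real.exp (-(n + 1 : ℝ)))),
      f t * t * |Real.log t| < ((n : ℝ) + 1)⁻¹ := by
    intro n
    by_contra hcon
    push_neg at hcon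
    set δ := min a (Real.exp (-(n + 1 : ℝ))) with hδ
    have hδ0 : 0 < δ := lt_min ha (Real.exp_pos _)
    have hδ1 : δ < 1 := by
      refine lt_of_le_of_lt (min_le_right _ _) ?_
      rw [Real.exp_lt_one_iff]
      have : (0:ℝ) ≤ (n:ℝ) := Nat.cast_nonneg n
      linarith
    have hδa : δ ≤ a := min_le_left _ _
    have hn0 : (0:ℝ) < (n : ℝ) + 1 := by positivity
    have hfδ : IntegrableOn f (Set.Ioo 0 δ) volume :=
      hf.mono_set (Set.Ioo_subset_Ioc_self.trans (Set.Ioc_subset_Ioc_right hδa))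
    have hint : IntegrableOn (fun t => ((n : ℝ) + 1)⁻¹ * (t * |Real.log t|)⁻¹)
        (Set.Ioo 0 δ) volume := by
      apply Integrable.mono' hfδ
      · exact (((measurable_id.mul Real.measurable_log.abs).inv).const_mul
          _).aestronglyMeasurable
      · filter_upwards [ae_restrict_mem measurableSet_Ioo] with t ht
        have ht0 : 0 < t := ht.1
        have htδ : t < δ := ht.2
        have hlog : Real.log t < 0 := Real.log_neg ht0 (htδ.trans hδ1)
        have habs : 0 < |Real.log t| := abs_pos.2 hlog.ne
        have hpos : 0 < t * |Real.log t| := mul_pos ht0 habs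
        have hge : ((n:ℝ) + 1)⁻¹ ≤ f t * (t * |Real.log t|) := by
          rw [← mul_assoc]; exact hcon t ⟨ht0, htδ.le⟩
        rw [Real.norm_eq_abs, abs_of_nonneg (by positivity)]
        calc ((n:ℝ) + 1)⁻¹ * (t * |Real.log t|)⁻¹
            ≤ (f t * (t * |Real.log t|)) * (t * |Real.log t|)⁻¹ :=
              mul_le_mul_of_nonneg_right hge (by positivity)
          _ = f t := by field_simp
    have hint2 : IntegrableOn (fun t => (t * |Real.log t|)⁻¹) (Set.Ioo 0 δ) volume := by
      have h3 : IntegrableOn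
          (fun t => ((n : ℝ) + 1) * (((n : ℝ) + 1)⁻¹ * (t * |Real.log t|)⁻¹))
          (Set.Ioo 0 δ) volume := hint.const_mul _
      refine h3.congr_fun (fun t _ => ?_) measurableSet_Ioo
      show ((n:ℝ) + 1) * (((n:ℝ) + 1)⁻¹ * (t * |Real.log t|)⁻¹) = _
      rw [← mul_assoc, mul_inv_cancel₀ hn0.ne', one_mul]
    exact aux_not_int hδ0 hδ1 hint2
  choose t ht hlt using key
  have hmem : ∀ n, t n ∈ Set.Ioc 0 a :=
    fun n => ⟨(ht n).1, (ht n).2.trans (min_le_left _ _)⟩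
  refine ⟨t, hmem, ?_, ?_⟩
  · apply squeeze_zero (fun n => (ht n).1.le)
      (fun n => (ht n).2.trans (min_le_right _ _))
    have h1 : Tendsto (fun n : ℕ => -((n : ℝ) + 1)) atTop atBot := by
      apply tendsto_neg_atBot_iff.2
      exact tendsto_atTop_add_const_right _ 1 tendsto_natCast_atTop_atTop
    exact Real.tendsto_exp_atBot.comp h1
  · apply squeeze_zero
      (fun n => mul_nonneg (mul_nonneg (hf0 _ (hmem n)) (ht n).1.le) (abs_nonneg _))
      (fun n => (hlt n).le)
    have : Tendsto (fun n : ℕ => 1 / ((n : ℝ) + 1)) atTop (𝓝 0) :=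
      tendsto_one_div_add_atTop_nhds_zero_nat
    simpa [one_div] using this
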